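/- (Continuous-aperture form of the Γ-term in Theorem 4.1.) Let x, ψ be real numbers and let 0 < α ≤ π. Then (1/(2π)) ∫_0^{2π} exp(i x cos(ϑ − ψ)) · [ (1/(2α)) ∫_{ϑ−α}^{ϑ+α} exp(i x cos(θ − ψ)) dθ ] dϑ = J_0(x)² + 2 ∑_{q=1}^∞ (−1)^q J_q(x)² sinc(qα), where the series converges absolutely. -/

import Mathlib

open MeasureTheory Filter

/-- Bessel function of the first kind of integer order `n`, via the integral
representation `J_n(x) = (1/(2π)) ∫_0^{2π} exp(i (x sin θ - n θ)) dθ`. -/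
noncomputable def besselJ (n : ℤ) (x : ℝ) : ℂ :=
  (1 / (2 * Real.pi)) * ∫ θ in (0:ℝ)..(2 * Real.pi),
    Complex.exp (Complex.I * ((x : ℂ) * (Real.sin θ : ℂ) - (n : ℂ) * (θ : ℂ)))

/-- The unnormalized sinc function: `sinc t = sin t / t` for `t ≠ 0`, and `sinc 0 = 1`. -/
noncomputable def rsinc (t : ℝ) : ℝ := if t = 0 then 1 else Real.sin t / t

namespace GammaCA

open Complex intervalIntegral AddCircle
open scoped Real ComplexConjugate

instance : Fact (0 < 2 * Real.pi) := ⟨by positivity⟩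

/-- The periodic integrand. -/
noncomputable def f (x ψ : ℝ) (ϑ : ℝ) : ℂ :=
  Complex.exp (Complex.I * (x:ℂ) * (Real.cos (ϑ - ψ) : ℂ))

lemma f_periodic (x ψ : ℝ) : Function.Periodic (f x ψ) (2 * Real.pi) := fun ϑ => by
  unfold f
  rw [show ϑ + 2*Real.pi - ψ = (ϑ - ψ) + 2*Real.pi by ring, Real.cos_add_two_pi]

/-- The periodic integrand, as a function on the circle. -/
noncomputable def F (x ψ : ℝ) : AddCircle (2*Real.pi) → ℂ := (f_periodic x ψ).lift

lemma F_coe (x ψ ϑ : ℝ) : F x ψ ↑ϑ = f x ψ ϑ := rfl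

lemma continuous_f (x ψ : ℝ) : Continuous (f x ψ) := by
  unfold f; fun_prop

lemma continuous_F (x ψ : ℝ) : Continuous (F x ψ) :=
  continuous_coinduced_dom.mpr (continuous_f x ψ)

lemma norm_f (x ψ ϑ : ℝ) : ‖f x ψ ϑ‖ = 1 := by
  unfold f
  have h : (Complex.I * (x:ℂ) * (Real.cos (ϑ - ψ) : ℂ)).re = 0 := by
    simp [Complex.mul_re, Complex.mul_im, ← Complex.ofReal_cos]
  rw [Complex.norm_exp, h, Real.exp_zero]

lemma norm_F (x ψ : ℝ) (z : AddCircle (2*Real.pi)) : ‖F x ψ z‖ = 1 := by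
  induction z using QuotientAddGroup.induction_on
  rw [F_coe]; exact norm_f x ψ _

lemma fourier_eq (n : ℤ) (θ : ℝ) :
    (fourier n (θ : AddCircle (2*Real.pi)) : ℂ) = Complex.exp (Complex.I * n * θ) := by
  rw [fourier_coe_apply]
  congr 1
  have hπ : (Real.pi : ℂ) ≠ 0 := Complex.ofReal_ne_zero.mpr Real.pi_ne_zero
  push_cast
  field_simp

lemma norm_fourier (n : ℤ) (z : AddCircle (2*Real.pi)) : ‖(fourier n z : ℂ)‖ = 1 := by
  exact Circle.norm_coe _

lemma fourier_apply_add (n : ℤ) (z w : AddCircle (2*Real.pi)) :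
    (fourier n (z + w) : ℂ) = fourier n z * fourier n w := by
  simp_rw [fourier_apply, smul_add, AddCircle.toCircle_add, Circle.coe_mul]

lemma per_int (x : ℝ) (m : ℤ) :
    Function.Periodic
      (fun θ : ℝ => Complex.exp (Complex.I * ((x : ℂ) * (Real.sin θ : ℂ) - (m : ℂ) * (θ : ℂ))))
      (2 * Real.pi) := fun θ => by
  simp only [Real.sin_add_two_pi]
  have : Complex.I * ((x : ℂ) * (Real.sin θ : ℂ) - (m : ℂ) * ((θ + 2*Real.pi : ℝ) : ℂ))
      = Complex.I * ((x : ℂ) * (Real.sin θ : ℂ) - (m : ℂ) * (θ : ℂ))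
        + (-m : ℤ) * (2 * (Real.pi:ℂ) * Complex.I) := by
    push_cast; ring
  rw [this, Complex.exp_add, Complex.exp_int_mul_two_pi_mul_I, mul_one]

lemma exp_I_int_pi (n : ℤ) : Complex.exp (Complex.I * n * Real.pi) = (-1) ^ n := by
  rw [show Complex.I * n * (Real.pi:ℂ) = n * ((Real.pi:ℂ) * Complex.I) by ring,
    Complex.exp_int_mul, Complex.exp_pi_mul_I]

lemma besselJ_neg (n : ℤ) (x : ℝ) : besselJ (-n) x = (-1) ^ n * besselJ n x := by
  unfold besselJ
  set g : ℝ → ℂ := fun θ =>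
    Complex.exp (Complex.I * ((x : ℂ) * (Real.sin θ : ℂ) - ((-n : ℤ) : ℂ) * (θ : ℂ))) with hg
  set g' : ℝ → ℂ := fun θ =>
    Complex.exp (Complex.I * ((x : ℂ) * (Real.sin θ : ℂ) - (n : ℂ) * (θ : ℂ))) with hg'
  have B : (∫ u in (-Real.pi)..Real.pi, g (Real.pi - u)) = ∫ θ in (0:ℝ)..(2*Real.pi), g θ := by
    rw [integral_comp_sub_left g Real.pi,
      show Real.pi - Real.pi = 0 by ring, show Real.pi - -Real.pi = 2*Real.pi by ring]
  have C : ∀ u : ℝ, g (Real.pi - u) = (-1:ℂ)^n * g' u := by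
    intro u
    rw [hg, hg']
    simp only [Real.sin_pi_sub]
    rw [← exp_I_int_pi n, ← Complex.exp_add]
    congr 1
    push_cast
    ring
  have D : (∫ u in (-Real.pi)..Real.pi, g (Real.pi - u))
      = (-1:ℂ)^n * ∫ u in (-Real.pi)..Real.pi, g' u := by
    simp_rw [C]
    exact intervalIntegral.integral_const_mul _ _
  have E : (∫ u in (-Real.pi)..Real.pi, g' u) = ∫ θ in (0:ℝ)..(2*Real.pi), g' θ := by
    have := (per_int x n).intervalIntegral_add_eq (-Real.pi) 0
    rw [show -Real.pi + 2*Real.pi = Real.pi by ring, zero_add] at this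
    exact this
  rw [← B, D, E]
  ring

lemma fourierCoeff_F (x ψ : ℝ) (n : ℤ) :
    fourierCoeff (F x ψ) n
      = Complex.exp (Complex.I * n * ((Real.pi:ℂ)/2 - ψ)) * besselJ n x := by
  rw [fourierCoeff_eq_intervalIntegral (F x ψ) n (ψ - Real.pi/2)]
  have key : ∀ u : ℝ,
      (fourier (-n) (((u + (ψ - Real.pi/2) : ℝ)) : AddCircle (2*Real.pi)) : ℂ)
          • F x ψ (((u + (ψ - Real.pi/2) : ℝ)) : AddCircle (2*Real.pi))
        = Complex.exp (Complex.I * n * ((Real.pi:ℂ)/2 - ψ))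
            * Complex.exp (Complex.I * ((x:ℂ) * (Real.sin u : ℂ) - (n:ℂ) * (u:ℂ))) := by
    intro u
    rw [smul_eq_mul, fourier_eq, F_coe]
    unfold f
    rw [show u + (ψ - Real.pi/2) - ψ = -(Real.pi/2 - u) by ring, Real.cos_neg,
      Real.cos_pi_div_two_sub]
    rw [← Complex.exp_add, ← Complex.exp_add]
    congr 1
    push_cast
    ring
  have e : (∫ u in (ψ - Real.pi/2)..(ψ - Real.pi/2 + 2*Real.pi),
        (fourier (-n) ((u : ℝ) : AddCircle (2*Real.pi)) : ℂ) • F x ψ ((u : ℝ) : AddCircle (2*Real.pi)))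
      = ∫ u in (0:ℝ)..(2*Real.pi),
        (fourier (-n) (((u + (ψ - Real.pi/2) : ℝ)) : AddCircle (2*Real.pi)) : ℂ)
          • F x ψ (((u + (ψ - Real.pi/2) : ℝ)) : AddCircle (2*Real.pi)) := by
    rw [intervalIntegral.integral_comp_add_right
      (fun u : ℝ => (fourier (-n) ((u : ℝ) : AddCircle (2*Real.pi)) : ℂ)
        • F x ψ ((u : ℝ) : AddCircle (2*Real.pi))) (ψ - Real.pi/2)]
    congr 1 <;> ring
  rw [e]
  simp_rw [key]
  rw [intervalIntegral.integral_const_mul]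
  rw [besselJ, Complex.real_smul]
  push_cast
  ring

lemma exp_integral_sinc (α : ℝ) (hα : 0 < α) (n : ℤ) :
    (1/(2*(α:ℂ))) * ∫ s in Set.Ioc (-α) α, Complex.exp (Complex.I * n * s)
      = (rsinc (n * α) : ℂ) := by
  have hle : -α ≤ α := by linarith
  rw [← intervalIntegral.integral_of_le hle]
  rcases eq_or_ne n 0 with h | h
  · subst h
    have hα' : (α:ℂ) ≠ 0 := Complex.ofReal_ne_zero.mpr hα.ne'
    simp only [Int.cast_zero, zero_mul, mul_zero, Complex.exp_zero,
      intervalIntegral.integral_const, Complex.real_smul, mul_one, rsinc, sub_neg_eq_add]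
    norm_num
    field_simp
    ring
  · have hc : Complex.I * n ≠ 0 := by
      simp [Complex.I_ne_zero, h]
    have hint : (∫ s in (-α:ℝ)..α, Complex.exp (Complex.I * n * s))
        = (Complex.exp ((Complex.I * n) * α) - Complex.exp ((Complex.I * n) * (-α:ℝ)))
            / (Complex.I * n) := by
      rw [show (fun s : ℝ => Complex.exp (Complex.I * n * s))
          = fun s : ℝ => Complex.exp ((Complex.I * n) * s) by rfl]
      exact integral_exp_mul_complex hc
    rw [hint]
    have e1 : Complex.exp ((Complex.I * n) * α)
        = Complex.cos ((n*α:ℝ):ℂ) + Complex.sin ((n*α:ℝ):ℂ) * Complex.I := by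
      rw [show (Complex.I * n) * α = ((n*α:ℝ):ℂ) * Complex.I by push_cast; ring,
        Complex.exp_mul_I]
    have e2 : Complex.exp ((Complex.I * n) * (-α:ℝ))
        = Complex.cos ((n*α:ℝ):ℂ) - Complex.sin ((n*α:ℝ):ℂ) * Complex.I := by
      rw [show (Complex.I * n) * ((-α:ℝ):ℂ) = (-((n*α:ℝ):ℂ)) * Complex.I by push_cast; ring,
        Complex.exp_mul_I, Complex.cos_neg, Complex.sin_neg]
      ring
    have hnR : ((n:ℝ) * α) ≠ 0 := mul_ne_zero (by exact_mod_cast h) hα.ne'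
    rw [e1, e2, rsinc, if_neg hnR]
    have hnC : (n:ℂ) ≠ 0 := Int.cast_ne_zero.mpr h
    have hαC : (α:ℂ) ≠ 0 := Complex.ofReal_ne_zero.mpr hα.ne'
    push_cast
    field_simp
    ring

/-- The moving-average function on the circle. -/
noncomputable def Hfun (x ψ α : ℝ) : AddCircle (2*Real.pi) → ℂ :=
  fun z => (1/(2*(α:ℂ))) * ∫ s in Set.Ioc (-α) α, F x ψ (z + ((s:ℝ) : AddCircle (2*Real.pi)))

lemma Hfun_coe (x ψ α : ℝ) (hα : 0 < α) (ϑ : ℝ) :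
    Hfun x ψ α ↑ϑ = (1/(2*(α:ℂ))) * ∫ θ in (ϑ - α)..(ϑ + α), f x ψ θ := by
  unfold Hfun
  congr 1
  rw [← intervalIntegral.integral_of_le (by linarith : -α ≤ α)]
  have h1 : ∀ s : ℝ,
      F x ψ ((ϑ : AddCircle (2*Real.pi)) + ((s:ℝ) : AddCircle (2*Real.pi))) = f x ψ (ϑ + s) := by
    intro s
    rw [show ((ϑ : AddCircle (2*Real.pi)) + ((s:ℝ) : AddCircle (2*Real.pi)))
        = (((ϑ + s : ℝ)) : AddCircle (2*Real.pi)) by norm_cast, F_coe]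
  simp_rw [h1]
  rw [intervalIntegral.integral_comp_add_left (f x ψ) ϑ]
  congr 1 <;> ring

lemma norm_Hfun_le (x ψ α : ℝ) (hα : 0 < α) (z : AddCircle (2*Real.pi)) :
    ‖Hfun x ψ α z‖ ≤ 1 := by
  unfold Hfun
  rw [norm_mul]
  have h1 : ‖(1/(2*(α:ℂ)))‖ = 1/(2*α) := by
    have : ((2*α : ℝ) : ℂ) = 2*(α:ℂ) := by push_cast; ring
    rw [norm_div, norm_one, ← this, Complex.norm_real, Real.norm_eq_abs,
      abs_of_pos (by linarith : (0:ℝ) < 2*α)]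
  have h2 : ‖∫ s in Set.Ioc (-α) α, F x ψ (z + ((s:ℝ) : AddCircle (2*Real.pi)))‖ ≤ 2*α := by
    have hmeas : volume (Set.Ioc (-α) α) < ⊤ := by
      simp [Real.volume_Ioc]
    have hsm : AEStronglyMeasurable (fun s : ℝ => F x ψ (z + ((s:ℝ) : AddCircle (2*Real.pi))))
        ((volume : Measure ℝ).restrict (Set.Ioc (-α) α)) :=
      ((continuous_F x ψ).comp (continuous_const.add (AddCircle.continuous_mk' _))).aestronglyMeasurable
    have := norm_setIntegral_le_of_norm_le_const (C := 1) hmeas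
      (fun s _ => le_of_eq (norm_F x ψ (z + ((s:ℝ) : AddCircle (2*Real.pi)))))
    rw [Real.volume_real_Ioc_of_le (by linarith), one_mul] at this
    calc ‖∫ s in Set.Ioc (-α) α, F x ψ (z + ((s:ℝ) : AddCircle (2*Real.pi)))‖
        ≤ α - (-α) := this
      _ = 2*α := by ring
  calc ‖(1/(2*(α:ℂ)))‖ * ‖∫ s in Set.Ioc (-α) α, F x ψ (z + ((s:ℝ) : AddCircle (2*Real.pi)))‖
      ≤ (1/(2*α)) * (2*α) := by
        rw [h1]
        exact mul_le_mul_of_nonneg_left h2 (by positivity)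
    _ = 1 := by field_simp

lemma aesm_Hfun (x ψ α : ℝ) :
    AEStronglyMeasurable (Hfun x ψ α) haarAddCircle := by
  have hcont : Continuous fun p : AddCircle (2*Real.pi) × ℝ =>
      F x ψ (p.1 + ((p.2 : ℝ) : AddCircle (2*Real.pi))) :=
    (continuous_F x ψ).comp (continuous_fst.add ((AddCircle.continuous_mk' _).comp continuous_snd))
  have h := (hcont.aestronglyMeasurable
    (μ := haarAddCircle.prod ((volume : Measure ℝ).restrict (Set.Ioc (-α) α)))).integral_prod_right'
  exact h.const_mul _

lemma memLp_Hfun (x ψ α : ℝ) (hα : 0 < α) :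
    MemLp (Hfun x ψ α) 2 haarAddCircle :=
  MemLp.of_bound (aesm_Hfun x ψ α) 1 (Eventually.of_forall (norm_Hfun_le x ψ α hα))

lemma memLp_conjF (x ψ : ℝ) :
    MemLp (fun z => (starRingEnd ℂ) (F x ψ z)) 2 haarAddCircle := by
  refine MemLp.of_bound ?_ 1 (Eventually.of_forall fun z => ?_)
  · exact (continuous_star.comp (continuous_F x ψ)).aestronglyMeasurable
  · rw [RCLike.norm_conj, norm_F]

lemma fourierCoeff_congr_ae {g h : AddCircle (2*Real.pi) → ℂ}
    (hgh : g =ᵐ[haarAddCircle] h) (n : ℤ) : fourierCoeff g n = fourierCoeff h n := by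
  simp only [fourierCoeff]
  exact integral_congr_ae (hgh.mono fun z hz => by dsimp only; rw [hz])

lemma conj_fourierCoeff (g : AddCircle (2*Real.pi) → ℂ) (n : ℤ) :
    (starRingEnd ℂ) (fourierCoeff (fun z => (starRingEnd ℂ) (g z)) n)
      = fourierCoeff g (-n) := by
  simp only [fourierCoeff, smul_eq_mul]
  rw [← integral_conj]
  rw [neg_neg]
  congr 1
  funext z
  rw [map_mul, Complex.conj_conj, ← fourier_neg, neg_neg]

lemma fourierCoeff_Hfun (x ψ α : ℝ) (hα : 0 < α) (n : ℤ) :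
    fourierCoeff (Hfun x ψ α) n
      = fourierCoeff (F x ψ) n * ((rsinc ((n:ℝ) * α) : ℝ) : ℂ) := by
  haveI : IsFiniteMeasure ((volume : Measure ℝ).restrict (Set.Ioc (-α) α)) := by
    constructor
    rw [Measure.restrict_apply_univ]
    simp [Real.volume_Ioc]
  have hcont : Continuous fun p : AddCircle (2*Real.pi) × ℝ =>
      (fourier (-n) p.1 : ℂ) * F x ψ (p.1 + ((p.2 : ℝ) : AddCircle (2*Real.pi))) :=
    ((map_continuous (fourier (-n))).comp continuous_fst).mul
      ((continuous_F x ψ).comp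
        (continuous_fst.add ((AddCircle.continuous_mk' _).comp continuous_snd)))
  have hInt : Integrable
      (fun p : AddCircle (2*Real.pi) × ℝ =>
        (fourier (-n) p.1 : ℂ) * F x ψ (p.1 + ((p.2 : ℝ) : AddCircle (2*Real.pi))))
      (haarAddCircle.prod ((volume : Measure ℝ).restrict (Set.Ioc (-α) α))) := by
    refine Integrable.mono' (integrable_const 1) hcont.aestronglyMeasurable ?_
    refine Eventually.of_forall fun p => ?_
    rw [norm_mul, norm_F, norm_fourier, one_mul]
  have inner_eq : ∀ s : ℝ,
      (∫ z, (fourier (-n) z : ℂ) * F x ψ (z + ((s:ℝ) : AddCircle (2*Real.pi))) ∂haarAddCircle)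
        = Complex.exp (Complex.I * n * s) * fourierCoeff (F x ψ) n := by
    intro s
    have ht := MeasureTheory.integral_add_right_eq_self (μ := haarAddCircle)
      (fun w => (fourier (-n) (w - ((s:ℝ) : AddCircle (2*Real.pi))) : ℂ) * F x ψ w)
      (((s:ℝ) : AddCircle (2*Real.pi)))
    simp only [add_sub_cancel_right] at ht
    rw [ht]
    have h2 : ∀ w : AddCircle (2*Real.pi),
        (fourier (-n) (w - ((s:ℝ) : AddCircle (2*Real.pi))) : ℂ) * F x ψ w
          = Complex.exp (Complex.I * n * s) * ((fourier (-n) w : ℂ) * F x ψ w) := by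
      intro w
      rw [sub_eq_add_neg, show -(((s:ℝ)) : AddCircle (2*Real.pi)) = (((-s : ℝ)) : AddCircle (2*Real.pi)) by norm_cast,
        fourier_apply_add, fourier_eq]
      rw [show Complex.I * ((-n : ℤ) : ℂ) * ((-s : ℝ) : ℂ) = Complex.I * n * s by push_cast; ring]
      ring
    simp_rw [h2]
    rw [MeasureTheory.integral_const_mul]
    congr 1
  calc fourierCoeff (Hfun x ψ α) n
      = ∫ z, (1/(2*(α:ℂ))) * ∫ s in Set.Ioc (-α) α,
          (fourier (-n) z : ℂ) * F x ψ (z + ((s:ℝ) : AddCircle (2*Real.pi))) ∂volume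
            ∂haarAddCircle := by
        simp only [fourierCoeff, smul_eq_mul]
        refine integral_congr_ae (Eventually.of_forall fun z => ?_)
        simp only [Hfun]
        rw [MeasureTheory.integral_const_mul ((fourier (-n) z : ℂ))]
        ring
    _ = (1/(2*(α:ℂ))) * ∫ z, ∫ s in Set.Ioc (-α) α,
          (fourier (-n) z : ℂ) * F x ψ (z + ((s:ℝ) : AddCircle (2*Real.pi))) ∂volume
            ∂haarAddCircle := MeasureTheory.integral_const_mul _ _
    _ = (1/(2*(α:ℂ))) * ∫ s in Set.Ioc (-α) α, ∫ z,
          (fourier (-n) z : ℂ) * F x ψ (z + ((s:ℝ) : AddCircle (2*Real.pi))) ∂haarAddCircle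
            ∂volume := by
        rw [MeasureTheory.integral_integral_swap hInt]
    _ = (1/(2*(α:ℂ))) * ∫ s in Set.Ioc (-α) α,
          Complex.exp (Complex.I * n * s) * fourierCoeff (F x ψ) n ∂volume := by
        congr 1
        exact integral_congr_ae (Eventually.of_forall fun s => inner_eq s)
    _ = fourierCoeff (F x ψ) n
          * ((1/(2*(α:ℂ))) * ∫ s in Set.Ioc (-α) α, Complex.exp (Complex.I * n * s)) := by
        rw [MeasureTheory.integral_mul_const]
        ring
    _ = fourierCoeff (F x ψ) n * ((rsinc ((n:ℝ) * α) : ℝ) : ℂ) := by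
        rw [exp_integral_sinc α hα n]

lemma rsinc_neg (t : ℝ) : rsinc (-t) = rsinc t := by
  unfold rsinc
  rcases eq_or_ne t 0 with h | h
  · simp [h]
  · rw [if_neg (by simpa using h), if_neg h, Real.sin_neg, neg_div_neg_eq]

lemma neg_one_zpow_sq (m : ℤ) : ((-1:ℂ) ^ m) ^ 2 = 1 := by
  rw [sq, ← zpow_add₀ (by norm_num : (-1:ℂ) ≠ 0)]
  exact Even.neg_one_zpow ⟨m, rfl⟩

lemma neg_one_zpow_neg (m : ℤ) : ((-1:ℂ)) ^ (-m) = (-1:ℂ) ^ m := by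
  have h := neg_one_zpow_sq m
  rw [sq] at h
  rw [zpow_neg]
  exact inv_eq_of_mul_eq_one_right h

end GammaCA

open GammaCA AddCircle Complex intervalIntegral
open scoped Real

/-- Continuous-aperture form of the Γ-term: for real `x`, `ψ` and `0 < α ≤ π`,
`(1/(2π)) ∫_0^{2π} exp(i x cos(ϑ − ψ)) [(1/(2α)) ∫_{ϑ−α}^{ϑ+α} exp(i x cos(θ − ψ)) dθ] dϑ
  = J_0(x)² + 2 ∑_{q=1}^∞ (−1)^q J_q(x)² sinc(qα)`, the series converging absolutely. -/
theorem gamma_term_continuous_aperture (x ψ α : ℝ) (hα0 : 0 < α) (hαπ : α ≤ Real.pi) :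
    Summable (fun q : ℕ =>
      ‖(-1 : ℂ) ^ (q + 1) * besselJ (q + 1) x ^ 2 * (rsinc (((q : ℝ) + 1) * α) : ℂ)‖) ∧
    (1 / (2 * (Real.pi : ℂ))) *
        ∫ ϑ in (0:ℝ)..(2 * Real.pi),
          Complex.exp (Complex.I * (x : ℂ) * (Real.cos (ϑ - ψ) : ℂ)) *
            ((1 / (2 * (α : ℂ))) *
              ∫ θ in (ϑ - α)..(ϑ + α),
                Complex.exp (Complex.I * (x : ℂ) * (Real.cos (θ - ψ) : ℂ)))
      = besselJ 0 x ^ 2 +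
        2 * ∑' q : ℕ,
          (-1 : ℂ) ^ (q + 1) * besselJ (q + 1) x ^ 2 * (rsinc (((q : ℝ) + 1) * α) : ℂ) := by
  classical
  have hGmem := memLp_conjF x ψ
  have hHmem := memLp_Hfun x ψ α hα0
  set gG := hGmem.toLp _ with hgG
  set gH := hHmem.toLp _ with hgH
  have hsum0 := (@fourierBasis (2*Real.pi) _).hasSum_inner_mul_inner gG gH
  have hcoefH : ∀ n : ℤ,
      (inner ℂ ((@fourierBasis (2*Real.pi) _) n) gH : ℂ) = fourierCoeff (Hfun x ψ α) n := by
    intro n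
    rw [← HilbertBasis.repr_apply_apply, fourierBasis_repr]
    exact fourierCoeff_congr_ae hHmem.coeFn_toLp n
  have hcoefG : ∀ n : ℤ,
      (inner ℂ gG ((@fourierBasis (2*Real.pi) _) n) : ℂ) = fourierCoeff (F x ψ) (-n) := by
    intro n
    rw [← inner_conj_symm, ← HilbertBasis.repr_apply_apply, fourierBasis_repr]
    rw [fourierCoeff_congr_ae hGmem.coeFn_toLp n]
    exact conj_fourierCoeff (F x ψ) n
  have hinner : (inner ℂ gG gH : ℂ) = ∫ z, F x ψ z * Hfun x ψ α z ∂haarAddCircle := by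
    rw [MeasureTheory.L2.inner_def]
    refine integral_congr_ae ?_
    filter_upwards [hGmem.coeFn_toLp, hHmem.coeFn_toLp] with z h1 h2
    rw [h1, h2]
    simp [RCLike.inner_apply]
    ring
  set A : ℤ → ℂ := fun n => fourierCoeff (F x ψ) (-n) * fourierCoeff (Hfun x ψ α) n with hA
  have hAsum : HasSum A (∫ z, F x ψ z * Hfun x ψ α z ∂haarAddCircle) := by
    have heq : (fun n : ℤ =>
        (inner ℂ gG ((@fourierBasis (2*Real.pi) _) n) : ℂ)
          * inner ℂ ((@fourierBasis (2*Real.pi) _) n) gH) = A := by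
      funext n; rw [hcoefG n, hcoefH n]
    rw [← hinner, ← heq]
    exact hsum0
  have hAval : ∀ n : ℤ,
      A n = (-1:ℂ)^n * besselJ n x ^ 2 * ((rsinc ((n:ℝ)*α) : ℝ) : ℂ) := by
    intro n
    rw [hA]
    dsimp only
    rw [fourierCoeff_Hfun x ψ α hα0 n, fourierCoeff_F x ψ (-n), fourierCoeff_F x ψ n,
      besselJ_neg n x]
    have hprod : Complex.exp (Complex.I * ((-n : ℤ) : ℂ) * ((Real.pi:ℂ)/2 - ψ))
        * Complex.exp (Complex.I * (n:ℂ) * ((Real.pi:ℂ)/2 - ψ)) = 1 := by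
      rw [← Complex.exp_add,
        show Complex.I * ((-n : ℤ) : ℂ) * ((Real.pi:ℂ)/2 - ψ)
            + Complex.I * (n:ℂ) * ((Real.pi:ℂ)/2 - ψ) = 0 by push_cast; ring,
        Complex.exp_zero]
    linear_combination
      ((-1:ℂ)^n * besselJ n x ^ 2 * ((rsinc ((n:ℝ)*α) : ℝ) : ℂ)) * hprod
  have hterm : ∀ q : ℕ,
      A ((q:ℤ)+1) = (-1 : ℂ) ^ (q + 1) * besselJ ((q:ℤ) + 1) x ^ 2
        * ((rsinc (((q : ℝ) + 1) * α) : ℝ) : ℂ) := by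
    intro q
    rw [hAval ((q:ℤ)+1)]
    have e1 : ((-1:ℂ)) ^ ((q:ℤ)+1) = (-1:ℂ) ^ (q+1) := by
      rw [show ((q:ℤ)+1) = ((q+1 : ℕ) : ℤ) by push_cast; ring, zpow_natCast]
    have e2 : ((((q:ℤ)+1 : ℤ) : ℝ)) * α = ((q:ℝ)+1)*α := by push_cast; ring
    rw [e1, e2]
  have hAsymm : ∀ q : ℕ, A (-((q:ℤ)+1)) = A ((q:ℤ)+1) := by
    intro q
    rw [hAval (-((q:ℤ)+1)), hAval ((q:ℤ)+1), besselJ_neg ((q:ℤ)+1) x, neg_one_zpow_neg]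
    rw [show (((-((q:ℤ)+1) : ℤ)) : ℝ) * α = -(((((q:ℤ)+1 : ℤ)) : ℝ) * α) by push_cast; ring,
      rsinc_neg]
    have hsq := neg_one_zpow_sq ((q:ℤ)+1)
    linear_combination
      ((-1:ℂ)^((q:ℤ)+1) * besselJ ((q:ℤ)+1) x ^ 2 * ((rsinc (((((q:ℤ)+1 : ℤ)) : ℝ) * α) : ℝ) : ℂ)) * hsq
  have hA0 : A 0 = besselJ 0 x ^ 2 := by
    rw [hAval 0]
    norm_num [rsinc]
  have hAnorm : Summable (fun n : ℤ => ‖A n‖) := summable_norm_iff.mpr hAsum.summable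
  have hinj1 : Function.Injective (fun q : ℕ => ((q:ℤ)+1)) := fun a b h => by simpa using h
  have hinj0 : Function.Injective (fun q : ℕ => (q:ℤ)) := fun a b h => by simpa using h
  have hinj2 : Function.Injective (fun q : ℕ => -((q:ℤ)+1)) := fun a b h => by simpa using h
  constructor
  · have h1 : (fun q : ℕ =>
        ‖(-1 : ℂ) ^ (q + 1) * besselJ (q + 1) x ^ 2 * (rsinc (((q : ℝ) + 1) * α) : ℂ)‖)
        = fun q : ℕ => ‖A ((q:ℤ)+1)‖ := funext fun q => by rw [hterm q]
    rw [h1]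
    exact hAnorm.comp_injective hinj1
  · show (1 / (2 * (Real.pi : ℂ))) *
        (∫ ϑ in (0:ℝ)..(2 * Real.pi), f x ψ ϑ *
          ((1 / (2 * (α : ℂ))) * ∫ θ in (ϑ - α)..(ϑ + α), f x ψ θ))
      = besselJ 0 x ^ 2 +
        2 * ∑' q : ℕ,
          (-1 : ℂ) ^ (q + 1) * besselJ (q + 1) x ^ 2 * (rsinc (((q : ℝ) + 1) * α) : ℂ)
    have hLHS : (1 / (2 * (Real.pi : ℂ))) *
        (∫ ϑ in (0:ℝ)..(2 * Real.pi), f x ψ ϑ *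
          ((1 / (2 * (α : ℂ))) * ∫ θ in (ϑ - α)..(ϑ + α), f x ψ θ))
        = ∫ z, F x ψ z * Hfun x ψ α z ∂haarAddCircle := by
      have h0 : fourierCoeff (fun z => F x ψ z * Hfun x ψ α z) 0
          = ∫ z, F x ψ z * Hfun x ψ α z ∂haarAddCircle := by
        simp only [fourierCoeff, neg_zero, fourier_zero, one_smul]
      have h1 := fourierCoeff_eq_intervalIntegral (fun z => F x ψ z * Hfun x ψ α z) 0 0
      rw [h0, zero_add] at h1
      rw [h1, Complex.real_smul]
      congr 1
      · push_cast; ring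
      · refine intervalIntegral.integral_congr fun ϑ hϑ => ?_
        simp only [neg_zero, fourier_zero, one_smul]
        rw [F_coe, Hfun_coe x ψ α hα0 ϑ]
    rw [hLHS, ← hAsum.tsum_eq]
    have hs1 : Summable (fun q : ℕ => A (q:ℤ)) := hAsum.summable.comp_injective hinj0
    have hs2 : Summable (fun q : ℕ => A (-((q:ℤ)+1))) := hAsum.summable.comp_injective hinj2
    have hsplit := tsum_of_nat_of_neg_add_one hs1 hs2
    rw [hsplit]
    have hzero : (∑' n : ℕ, A (n:ℤ)) = A 0 + ∑' q : ℕ, A ((q:ℤ)+1) := by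
      rw [Summable.tsum_eq_zero_add hs1]
      simp only [Nat.cast_zero, Nat.cast_add, Nat.cast_one]
    have hneg : (∑' q : ℕ, A (-((q:ℤ)+1))) = ∑' q : ℕ, A ((q:ℤ)+1) := tsum_congr hAsymm
    have htc : (∑' q : ℕ, A ((q:ℤ)+1)) = ∑' q : ℕ,
        (-1 : ℂ) ^ (q + 1) * besselJ (q + 1) x ^ 2 * (rsinc (((q : ℝ) + 1) * α) : ℂ) :=
      tsum_congr hterm
    rw [hzero, hneg, hA0, htc]
    ring
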